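/- For coprime integers h, k with k ≥ 1 and real numbers x, y not both integers (meaning at least one of x, y is not an integer — more precisely the stated hypothesis: x and/or y is not an integer), the Dedekind–Rademacher sums satisfy the reciprocity law s(h,k;x,y) + s(k,h;y,x) = ((x))·((y)) + (h²ψ₂(y) + ψ₂(hy + kx) + k²ψ₂(x))/(2hk), where ψ₂(x) = B₂({x}) and B₂(t) = t² − t + 1/6. -/

import Mathlib

open scoped Classical

/-- The Dedekind symbol `((x))`. -/
noncomputable def dedekindSymbol (x : ℝ) : ℝ :=
  if ∃ n : ℤ, x = (n : ℝ) then 0 else Int.fract x - 1/2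

/-- The Dedekind–Rademacher sum `s(h,k;x,y)`. -/
noncomputable def dedekindRademacherSum (h k : ℕ) (x y : ℝ) : ℝ :=
  ∑ μ ∈ Finset.range k,
    dedekindSymbol (((μ : ℝ) + y) / (k : ℝ)) *
      dedekindSymbol ((h : ℝ) * ((μ : ℝ) + y) / (k : ℝ) + x)

/-- The second Bernoulli polynomial. -/
noncomputable def B₂ (t : ℝ) : ℝ := t ^ 2 - t + 1/6

/-- `ψ₂(x) = B₂({x})`. -/
noncomputable def ψ₂ (x : ℝ) : ℝ := B₂ (Int.fract x)

open Finset

lemma isInt_iff_fract (x : ℝ) : (∃ n : ℤ, x = (n : ℝ)) ↔ Int.fract x = 0 := by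
  constructor
  · rintro ⟨n, rfl⟩; exact Int.fract_intCast n
  · intro hx
    refine ⟨⌊x⌋, ?_⟩
    have := Int.floor_add_fract x
    linarith

lemma chi_eq (x : ℝ) :
    dedekindSymbol x = if Int.fract x = 0 then 0 else Int.fract x - 1/2 := by
  simp only [dedekindSymbol, isInt_iff_fract]

lemma psi2_period : Function.Periodic ψ₂ 1 := by
  intro u
  unfold ψ₂
  rw [show u + 1 = u + ((1:ℤ):ℝ) by norm_num, Int.fract_add_intCast]

lemma chi_period : Function.Periodic dedekindSymbol 1 := by
  intro u
  rw [chi_eq, chi_eq, show u + 1 = u + ((1:ℤ):ℝ) by norm_num, Int.fract_add_intCast]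

lemma star (a b : ℝ) (hab : ¬(Int.fract a = 0 ∧ Int.fract b = 0)) :
    (dedekindSymbol a + dedekindSymbol b) * dedekindSymbol (a + b) =
      dedekindSymbol a * dedekindSymbol b + (ψ₂ a + ψ₂ b + ψ₂ (a + b)) / 2 := by
  have key : Int.fract (a + b) = Int.fract (Int.fract a + Int.fract b) := by
    conv_lhs => rw [← Int.floor_add_fract a, ← Int.floor_add_fract b]
    rw [show (⌊a⌋:ℝ) + Int.fract a + ((⌊b⌋:ℝ) + Int.fract b)
        = (Int.fract a + Int.fract b) + ((⌊a⌋ + ⌊b⌋ : ℤ):ℝ) by push_cast; ring,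
      Int.fract_add_intCast]
  set p := Int.fract a with hp'
  set q := Int.fract b with hq'
  have hp0 : 0 ≤ p := Int.fract_nonneg a
  have hp1 : p < 1 := Int.fract_lt_one a
  have hq0 : 0 ≤ q := Int.fract_nonneg b
  have hq1 : q < 1 := Int.fract_lt_one b
  rw [chi_eq, chi_eq, chi_eq]
  unfold ψ₂ B₂
  rw [key, ← hp', ← hq']
  by_cases hp : p = 0
  · have hq : q ≠ 0 := fun h => hab ⟨hp, h⟩
    rw [hp]
    have h1 : Int.fract ((0:ℝ) + q) = q := by
      rw [zero_add, Int.fract_eq_self.mpr ⟨hq0, hq1⟩]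
    rw [h1, if_pos rfl, if_neg hq]
    ring
  · by_cases hq : q = 0
    · rw [hq]
      have h1 : Int.fract (p + (0:ℝ)) = p := by
        rw [add_zero, Int.fract_eq_self.mpr ⟨hp0, hp1⟩]
      rw [h1, if_pos rfl, if_neg hp]
      ring
    · have hpp : 0 < p := lt_of_le_of_ne hp0 (Ne.symm hp)
      have hqq : 0 < q := lt_of_le_of_ne hq0 (Ne.symm hq)
      rcases lt_or_ge (p + q) 1 with hlt | hge
      · have h1 : Int.fract (p + q) = p + q := Int.fract_eq_self.mpr ⟨by linarith, hlt⟩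
        rw [h1, if_neg hp, if_neg hq, if_neg (by positivity : p + q ≠ 0)]
        ring
      · have h1 : Int.fract (p + q) = p + q - 1 := by
          rw [show p + q = (p + q - 1) + ((1:ℤ):ℝ) by push_cast; ring, Int.fract_add_intCast,
            Int.fract_eq_self.mpr ⟨by linarith, by linarith⟩]
          push_cast; ring
        rw [h1, if_neg hp, if_neg hq]
        rcases eq_or_lt_of_le hge with heq | hgt
        · rw [if_pos (by linarith)]
          have : q = 1 - p := by linarith
          rw [this]; ring
        · rw [if_neg (by intro h0; apply absurd h0; intro h0; linarith : ¬ p + q - 1 = 0)]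
          ring


lemma sum_id_real (n : ℕ) : ∑ μ ∈ range n, (μ:ℝ) = n*(n-1)/2 := by
  induction n with
  | zero => simp
  | succ m ih => rw [Finset.sum_range_succ, ih]; push_cast; ring

lemma sum_sq_real (n : ℕ) : ∑ μ ∈ range n, (μ:ℝ)^2 = n*(n-1)*(2*n-1)/6 := by
  induction n with
  | zero => simp
  | succ m ih => rw [Finset.sum_range_succ, ih]; push_cast; ring

lemma sum_shift_one (G : ℕ → ℝ) (m : ℕ) (hG : G m = G 0) :
    ∑ μ ∈ range m, G (μ + 1) = ∑ μ ∈ range m, G μ := by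
  have h1 := Finset.sum_range_succ' G m
  have h2 := Finset.sum_range_succ G m
  rw [h2] at h1
  linarith

lemma periodic_raabe (F : ℝ → ℝ) (hF : Function.Periodic F 1) (k : ℕ) :
    Function.Periodic (fun u => ∑ μ ∈ range k, F ((u + μ)/k)) 1 := by
  intro u
  simp only
  have key : ∀ μ : ℕ, (u + 1 + (μ:ℝ))/k = (u + ((μ+1 : ℕ):ℝ))/k := by
    intro μ; push_cast; ring
  calc ∑ μ ∈ range k, F ((u + 1 + μ)/k)
      = ∑ μ ∈ range k, (fun ν : ℕ => F ((u + ν)/k)) (μ + 1) := by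
        refine Finset.sum_congr rfl fun μ _ => ?_
        rw [key μ]
    _ = ∑ μ ∈ range k, F ((u + μ)/k) := by
        refine sum_shift_one (fun ν : ℕ => F ((u + ν)/k)) k ?_
        rcases Nat.eq_zero_or_pos k with hk | hk
        · subst hk; norm_num
        · have hk' : (k:ℝ) ≠ 0 := Nat.cast_ne_zero.mpr hk.ne'
          rw [show (u + (k:ℝ))/k = u/k + 1 by field_simp, hF (u/k),
            show (u + ((0:ℕ):ℝ))/k = u/k by norm_num]

-- Raabe formulas
lemma raabe_reduce (F : ℝ → ℝ) (hF : Function.Periodic F 1) (k : ℕ) (t : ℝ) :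
    ∑ μ ∈ range k, F ((t + μ)/k) = ∑ μ ∈ range k, F ((Int.fract t + μ)/k) := by
  have hper := periodic_raabe F hF k
  have := hper.sub_int_mul_eq (x := t) ⌊t⌋
  simp only [mul_one] at this
  rw [← this]
  rfl

lemma raabe_psi (k : ℕ) (hk : 0 < k) (t : ℝ) :
    ∑ μ ∈ range k, ψ₂ (((μ:ℝ) + t)/k) = ψ₂ t / k := by
  have hk' : (k:ℝ) ≠ 0 := Nat.cast_ne_zero.mpr hk.ne'
  have step0 : ∑ μ ∈ range k, ψ₂ (((μ:ℝ) + t)/k) = ∑ μ ∈ range k, ψ₂ ((t + μ)/k) := by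
    refine Finset.sum_congr rfl fun μ _ => ?_; rw [add_comm]
  rw [step0, raabe_reduce ψ₂ psi2_period k t]
  set s := Int.fract t with hs'
  have hs0 : 0 ≤ s := Int.fract_nonneg t
  have hs1 : s < 1 := Int.fract_lt_one t
  have hterm : ∀ μ ∈ range k, ψ₂ ((s + μ)/k) =
      (μ:ℝ)^2 * (1/(k:ℝ)^2) + (μ:ℝ) * ((2*s)/(k:ℝ)^2 - 1/(k:ℝ)) + (s^2/(k:ℝ)^2 - s/(k:ℝ) + 1/6) := by
    intro μ hμ
    have hμk : (μ:ℝ) + 1 ≤ (k:ℝ) := by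
      have := Finset.mem_range.mp hμ
      exact_mod_cast Nat.succ_le_of_lt this
    have hfr : Int.fract ((s + μ)/k) = (s + μ)/k := by
      rw [Int.fract_eq_self]
      constructor
      · positivity
      · rw [div_lt_one (by positivity)]; linarith
    unfold ψ₂ B₂
    rw [hfr]
    field_simp
    ring
  rw [Finset.sum_congr rfl hterm, Finset.sum_add_distrib, Finset.sum_add_distrib,
    ← Finset.sum_mul, ← Finset.sum_mul, sum_sq_real, sum_id_real,
    Finset.sum_const, Finset.card_range, nsmul_eq_mul]
  have : ψ₂ t = B₂ s := rfl
  rw [this]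
  unfold B₂
  field_simp
  ring

lemma raabe_chi (k : ℕ) (hk : 0 < k) (t : ℝ) :
    ∑ μ ∈ range k, dedekindSymbol (((μ:ℝ) + t)/k) = dedekindSymbol t := by
  have hk' : (k:ℝ) ≠ 0 := Nat.cast_ne_zero.mpr hk.ne'
  have step0 : ∑ μ ∈ range k, dedekindSymbol (((μ:ℝ) + t)/k)
      = ∑ μ ∈ range k, dedekindSymbol ((t + μ)/k) := by
    refine Finset.sum_congr rfl fun μ _ => ?_; rw [add_comm]
  have chifr : dedekindSymbol (Int.fract t) = dedekindSymbol t := by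
    rw [chi_eq, chi_eq, Int.fract_fract]
  rw [step0, raabe_reduce dedekindSymbol chi_period k t, ← chifr]
  set s := Int.fract t with hs'
  have hs0 : 0 ≤ s := Int.fract_nonneg t
  have hs1 : s < 1 := Int.fract_lt_one t
  by_cases hs : s = 0
  · rw [hs]
    rw [hs] at hs0 hs1 chifr
    clear hs'
    obtain ⟨m, rfl⟩ : ∃ m, k = m + 1 := ⟨k - 1, (Nat.succ_pred_eq_of_pos hk).symm⟩
    rw [Finset.sum_range_succ']
    have hterm : ∀ i ∈ range m, dedekindSymbol (((0:ℝ) + ((i+1 : ℕ):ℝ))/((m+1:ℕ):ℝ)) =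
        (i:ℝ) * (1/((m:ℝ)+1)) + (1/((m:ℝ)+1) - 1/2) := by
      intro i hi
      have him : (i:ℝ) + 1 < (m:ℝ) + 1 := by
        have := Finset.mem_range.mp hi
        have : (i:ℝ) < (m:ℝ) := by exact_mod_cast this
        linarith
      have hpos : (0:ℝ) < ((i:ℝ)+1)/((m:ℝ)+1) := by positivity
      have harg : ((0:ℝ) + ((i+1 : ℕ):ℝ))/((m+1:ℕ):ℝ) = ((i:ℝ)+1)/((m:ℝ)+1) := by
        push_cast; ring
      rw [harg, chi_eq, Int.fract_eq_self.mpr ⟨le_of_lt hpos, by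
        rw [div_lt_one (by positivity)]; linarith⟩, if_neg (ne_of_gt hpos)]
      field_simp
      ring
    rw [Finset.sum_congr rfl hterm, Finset.sum_add_distrib, ← Finset.sum_mul, sum_id_real,
      Finset.sum_const, Finset.card_range, nsmul_eq_mul]
    have hz3 : dedekindSymbol (0:ℝ) = 0 := by rw [chi_eq, if_pos (by norm_num)]
    have hz2 : dedekindSymbol (((0:ℝ) + ((0:ℕ):ℝ))/((m+1:ℕ):ℝ)) = 0 := by
      rw [show ((0:ℝ) + ((0:ℕ):ℝ))/((m+1:ℕ):ℝ) = 0 by norm_num, hz3]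
    rw [hz2, hz3]
    have hm' : ((m:ℝ)+1) ≠ 0 := by positivity
    field_simp
    ring
  · have hspos : 0 < s := lt_of_le_of_ne hs0 (Ne.symm hs)
    have hterm : ∀ μ ∈ range k, dedekindSymbol ((s + μ)/k) =
        (μ:ℝ) * (1/(k:ℝ)) + (s/(k:ℝ) - 1/2) := by
      intro μ hμ
      have hμk : (μ:ℝ) + 1 ≤ (k:ℝ) := by
        have := Finset.mem_range.mp hμ
        exact_mod_cast Nat.succ_le_of_lt this
      have hpos : (0:ℝ) < (s + μ)/k := by positivity
      rw [chi_eq, Int.fract_eq_self.mpr ⟨le_of_lt hpos, by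
        rw [div_lt_one (by positivity)]; linarith⟩, if_neg (ne_of_gt hpos)]
      field_simp
      ring
    rw [Finset.sum_congr rfl hterm, Finset.sum_add_distrib, ← Finset.sum_mul, sum_id_real,
      Finset.sum_const, Finset.card_range, nsmul_eq_mul, chi_eq,
      Int.fract_eq_self.mpr ⟨hs0, hs1⟩, if_neg hs]
    field_simp
    ring

lemma periodic_nat_mod {g : ℕ → ℝ} {m : ℕ} (hm : 0 < m) (hg : ∀ n, g (n + m) = g n) (n : ℕ) :
    g n = g (n % m) := by
  conv_lhs => rw [← Nat.mod_add_div n m]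
  generalize n / m = q
  induction q with
  | zero => simp
  | succ r ih => rw [Nat.mul_succ, ← add_assoc, hg, ih]

lemma crt_sum (h k : ℕ) (hh : 0 < h) (hk : 0 < k) (hcop : Nat.Coprime h k) (g : ℕ → ℝ)
    (hg : ∀ n, g (n + h * k) = g n) :
    ∑ μ ∈ range k, ∑ ν ∈ range h, g (h * μ + k * ν) = ∑ l ∈ range (h * k), g l := by
  classical
  have hm : 0 < h * k := Nat.mul_pos hh hk
  have hinj : ∀ p ∈ range k ×ˢ range h, ∀ p' ∈ range k ×ˢ range h,
      (h * p.1 + k * p.2) % (h * k) = (h * p'.1 + k * p'.2) % (h * k) → p = p' := by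
    intro p hp p' hp' hF
    rw [Finset.mem_product, Finset.mem_range, Finset.mem_range] at hp hp'
    have hmod : (h * p.1 + k * p.2) ≡ (h * p'.1 + k * p'.2) [MOD h * k] := hF
    have h1 : p.1 ≡ p'.1 [MOD k] := by
      have h2 := hmod.of_mul_left h
      have h3 : h * p.1 ≡ h * p'.1 [MOD k] := by
        unfold Nat.ModEq at h2 ⊢
        rwa [Nat.add_mul_mod_self_left, Nat.add_mul_mod_self_left] at h2
      exact Nat.ModEq.cancel_left_of_coprime (by rw [Nat.gcd_comm]; exact hcop) h3
    have h2 : p.2 ≡ p'.2 [MOD h] := by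
      have h2' := hmod.of_mul_right k
      have h3 : k * p.2 ≡ k * p'.2 [MOD h] := by
        unfold Nat.ModEq at h2' ⊢
        rw [add_comm (h * p.1), add_comm (h * p'.1)] at h2'
        rwa [Nat.add_mul_mod_self_left, Nat.add_mul_mod_self_left] at h2'
      exact Nat.ModEq.cancel_left_of_coprime hcop h3
    have e1 : p.1 = p'.1 := by
      have h1' := h1
      unfold Nat.ModEq at h1'
      rwa [Nat.mod_eq_of_lt hp.1, Nat.mod_eq_of_lt hp'.1] at h1'
    have e2 : p.2 = p'.2 := by
      have h2'' := h2
      unfold Nat.ModEq at h2''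
      rwa [Nat.mod_eq_of_lt hp.2, Nat.mod_eq_of_lt hp'.2] at h2''
    exact Prod.ext e1 e2
  have hinj' : Set.InjOn (fun p : ℕ × ℕ => (h * p.1 + k * p.2) % (h * k))
      ↑(range k ×ˢ range h) := fun x hx y hy hxy =>
    hinj x (Finset.mem_coe.mp hx) y (Finset.mem_coe.mp hy) hxy
  calc ∑ μ ∈ range k, ∑ ν ∈ range h, g (h * μ + k * ν)
      = ∑ p ∈ range k ×ˢ range h, g (h * p.1 + k * p.2) :=
        (Finset.sum_product' _ _ _).symm
    _ = ∑ p ∈ range k ×ˢ range h, g ((h * p.1 + k * p.2) % (h * k)) :=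
        Finset.sum_congr rfl fun p _ => periodic_nat_mod hm hg _
    _ = ∑ l ∈ Finset.image (fun p : ℕ × ℕ => (h * p.1 + k * p.2) % (h * k))
          (range k ×ˢ range h), g l := (Finset.sum_image hinj).symm
    _ = ∑ l ∈ range (h * k), g l := by
        congr 1
        apply Finset.eq_of_subset_of_card_le
        · intro l hl
          rw [Finset.mem_image] at hl
          obtain ⟨p, _, rfl⟩ := hl
          exact Finset.mem_range.mpr (Nat.mod_lt _ hm)
        · rw [Finset.card_range, Finset.card_image_of_injOn hinj', Finset.card_product,
            Finset.card_range, Finset.card_range]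
          exact (Nat.mul_comm h k).le

lemma fract_shift_div_ne (x : ℝ) (hx : ¬∃ m : ℤ, x = (m : ℝ)) (c N : ℕ) (hN : 0 < N) :
    Int.fract (((c : ℝ) + x)/(N : ℝ)) ≠ 0 := by
  intro h0
  obtain ⟨n, hn⟩ := (isInt_iff_fract _).mpr h0
  apply hx
  refine ⟨n * N - c, ?_⟩
  have hN' : (N : ℝ) ≠ 0 := Nat.cast_ne_zero.mpr hN.ne'
  push_cast
  field_simp at hn
  linarith

theorem dedekind_rademacher_reciprocity (h k : ℕ) (hh : 0 < h) (hk : 0 < k)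
    (hcop : Nat.Coprime h k) (x y : ℝ)
    (hxy : (¬ ∃ m : ℤ, x = (m : ℝ)) ∨ (¬ ∃ m : ℤ, y = (m : ℝ))) :
    dedekindRademacherSum h k x y + dedekindRademacherSum k h y x =
      dedekindSymbol x * dedekindSymbol y +
        ((h : ℝ) ^ 2 * ψ₂ y + ψ₂ ((h : ℝ) * y + (k : ℝ) * x) + (k : ℝ) ^ 2 * ψ₂ x) /
          (2 * (h : ℝ) * (k : ℝ)) := by
  have hh0 : (h : ℝ) ≠ 0 := Nat.cast_ne_zero.mpr hh.ne'
  have hk0 : (k : ℝ) ≠ 0 := Nat.cast_ne_zero.mpr hk.ne'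
  -- Step 1: expand the first sum via Raabe
  have s1 : dedekindRademacherSum h k x y
      = ∑ μ ∈ range k, ∑ ν ∈ range h,
          dedekindSymbol (((μ:ℝ) + y)/(k:ℝ)) *
            dedekindSymbol ((((μ:ℝ) + y)/(k:ℝ)) + (((ν:ℝ) + x)/(h:ℝ))) := by
    unfold dedekindRademacherSum
    refine Finset.sum_congr rfl fun μ _ => ?_
    rw [← raabe_chi h hh ((h:ℝ) * ((μ:ℝ) + y)/(k:ℝ) + x), Finset.mul_sum]
    refine Finset.sum_congr rfl fun ν _ => ?_
    congr 1
    field_simp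
    ring
  -- Step 2: expand the second sum via Raabe
  have s2 : dedekindRademacherSum k h y x
      = ∑ μ ∈ range k, ∑ ν ∈ range h,
          dedekindSymbol (((ν:ℝ) + x)/(h:ℝ)) *
            dedekindSymbol ((((μ:ℝ) + y)/(k:ℝ)) + (((ν:ℝ) + x)/(h:ℝ))) := by
    unfold dedekindRademacherSum
    rw [Finset.sum_comm]
    refine Finset.sum_congr rfl fun ν _ => ?_
    rw [← raabe_chi k hk ((k:ℝ) * ((ν:ℝ) + x)/(h:ℝ) + y), Finset.mul_sum]
    refine Finset.sum_congr rfl fun μ _ => ?_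
    congr 1
    field_simp
    ring
  rw [s1, s2, ← Finset.sum_add_distrib]
  -- pointwise star identity
  have step : ∀ μ ∈ range k,
      ((∑ ν ∈ range h, dedekindSymbol (((μ:ℝ) + y)/(k:ℝ)) *
            dedekindSymbol ((((μ:ℝ) + y)/(k:ℝ)) + (((ν:ℝ) + x)/(h:ℝ)))) +
        (∑ ν ∈ range h, dedekindSymbol (((ν:ℝ) + x)/(h:ℝ)) *
            dedekindSymbol ((((μ:ℝ) + y)/(k:ℝ)) + (((ν:ℝ) + x)/(h:ℝ)))))
      = ∑ ν ∈ range h,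
          (dedekindSymbol (((μ:ℝ) + y)/(k:ℝ)) * dedekindSymbol (((ν:ℝ) + x)/(h:ℝ))
            + ψ₂ (((μ:ℝ) + y)/(k:ℝ)) / 2 + ψ₂ (((ν:ℝ) + x)/(h:ℝ)) / 2
            + ψ₂ ((((μ:ℝ) + y)/(k:ℝ)) + (((ν:ℝ) + x)/(h:ℝ))) / 2) := by
    intro μ _
    rw [← Finset.sum_add_distrib]
    refine Finset.sum_congr rfl fun ν _ => ?_
    have hside : ¬(Int.fract (((μ:ℝ) + y)/(k:ℝ)) = 0 ∧ Int.fract (((ν:ℝ) + x)/(h:ℝ)) = 0) := by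
      rintro ⟨h1, h2⟩
      rcases hxy with hx | hy
      · exact fract_shift_div_ne x hx ν h hh h2
      · exact fract_shift_div_ne y hy μ k hk h1
    have hstar := star (((μ:ℝ) + y)/(k:ℝ)) (((ν:ℝ) + x)/(h:ℝ)) hside
    nlinarith [hstar]
  rw [Finset.sum_congr rfl step]
  -- split into four double sums
  simp only [Finset.sum_add_distrib]
  -- evaluate each piece
  have E1 : ∑ μ ∈ range k, ∑ ν ∈ range h,
      dedekindSymbol (((μ:ℝ) + y)/(k:ℝ)) * dedekindSymbol (((ν:ℝ) + x)/(h:ℝ))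
      = dedekindSymbol y * dedekindSymbol x := by
    have inner : ∀ μ ∈ range k, ∑ ν ∈ range h,
        dedekindSymbol (((μ:ℝ) + y)/(k:ℝ)) * dedekindSymbol (((ν:ℝ) + x)/(h:ℝ))
        = dedekindSymbol (((μ:ℝ) + y)/(k:ℝ)) * dedekindSymbol x := by
      intro μ _
      rw [← Finset.mul_sum, raabe_chi h hh x]
    rw [Finset.sum_congr rfl inner, ← Finset.sum_mul, raabe_chi k hk y]
  have E2 : ∑ μ ∈ range k, ∑ ν ∈ range h, ψ₂ (((μ:ℝ) + y)/(k:ℝ)) / 2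
      = (h:ℝ) / 2 * (ψ₂ y / (k:ℝ)) := by
    have inner : ∀ μ ∈ range k, ∑ ν ∈ range h, ψ₂ (((μ:ℝ) + y)/(k:ℝ)) / 2
        = (h:ℝ) / 2 * ψ₂ (((μ:ℝ) + y)/(k:ℝ)) := by
      intro μ _
      rw [Finset.sum_const, Finset.card_range, nsmul_eq_mul]
      ring
    rw [Finset.sum_congr rfl inner, ← Finset.mul_sum, raabe_psi k hk y]
  have E3 : ∑ μ ∈ range k, ∑ ν ∈ range h, ψ₂ (((ν:ℝ) + x)/(h:ℝ)) / 2
      = (k:ℝ) * ((ψ₂ x / (h:ℝ)) / 2) := by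
    have inner : ∀ μ ∈ range k, ∑ ν ∈ range h, ψ₂ (((ν:ℝ) + x)/(h:ℝ)) / 2
        = (ψ₂ x / (h:ℝ)) / 2 := by
      intro μ _
      rw [← Finset.sum_div, raabe_psi h hh x]
    rw [Finset.sum_congr rfl inner, Finset.sum_const, Finset.card_range, nsmul_eq_mul]
  have E4 : ∑ μ ∈ range k, ∑ ν ∈ range h,
      ψ₂ ((((μ:ℝ) + y)/(k:ℝ)) + (((ν:ℝ) + x)/(h:ℝ))) / 2
      = (ψ₂ ((h:ℝ) * y + (k:ℝ) * x) / ((h:ℝ) * (k:ℝ))) / 2 := by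
    set z : ℝ := (h:ℝ) * y + (k:ℝ) * x with hzdef
    set g : ℕ → ℝ := fun n => ψ₂ (((n:ℝ) + z)/((h:ℝ) * (k:ℝ))) with hgdef
    have hg : ∀ n, g (n + h * k) = g n := by
      intro n
      show ψ₂ ((((n + h * k : ℕ):ℝ) + z)/((h:ℝ) * (k:ℝ))) = ψ₂ (((n:ℝ) + z)/((h:ℝ) * (k:ℝ)))
      rw [show (((n + h * k : ℕ):ℝ) + z)/((h:ℝ) * (k:ℝ))
          = (((n:ℝ) + z)/((h:ℝ) * (k:ℝ))) + 1 by push_cast; field_simp; ring]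
      exact psi2_period _
    have hterm : ∀ μ ∈ range k, ∀ ν ∈ range h,
        ψ₂ ((((μ:ℝ) + y)/(k:ℝ)) + (((ν:ℝ) + x)/(h:ℝ))) / 2 = g (h * μ + k * ν) / 2 := by
      intro μ _ ν _
      show _ = ψ₂ ((((h * μ + k * ν : ℕ):ℝ) + z)/((h:ℝ) * (k:ℝ))) / 2
      congr 2
      push_cast
      field_simp
      ring
    calc ∑ μ ∈ range k, ∑ ν ∈ range h,
          ψ₂ ((((μ:ℝ) + y)/(k:ℝ)) + (((ν:ℝ) + x)/(h:ℝ))) / 2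
        = ∑ μ ∈ range k, ∑ ν ∈ range h, g (h * μ + k * ν) / 2 := by
          refine Finset.sum_congr rfl fun μ hμ => Finset.sum_congr rfl fun ν hν => ?_
          exact hterm μ hμ ν hν
      _ = (∑ μ ∈ range k, ∑ ν ∈ range h, g (h * μ + k * ν)) / 2 := by
          rw [Finset.sum_div]
          exact Finset.sum_congr rfl fun μ _ => (Finset.sum_div _ _ _).symm
      _ = (∑ l ∈ range (h * k), g l) / 2 := by rw [crt_sum h k hh hk hcop g hg]
      _ = (ψ₂ z / ((h:ℝ) * (k:ℝ))) / 2 := by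
          have := raabe_psi (h * k) (Nat.mul_pos hh hk) z
          have hcast : ((h * k : ℕ):ℝ) = (h:ℝ) * (k:ℝ) := by push_cast; ring
          rw [hcast] at this
          rw [show (∑ l ∈ range (h * k), g l) = ψ₂ z / ((h:ℝ) * (k:ℝ)) from this]
  rw [E1, E2, E3, E4]
  field_simp
  ring
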